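/- Let (γ_j) be nonincreasing nonnegative reals and γ_u = Γ_{|u|}∏_{j∈u}γ_j POD weights with decay_{γ,1} = p* and Γ_k ≤ C_q (k!)^q for some q < p*. Then for every τ ∈ [1, p*) and every constant C̃_τ > 0, the quantity ∑_{u : d ∈ u ⊆ [d]} γ_u^{1/τ} C̃_τ^{|u|} is bounded above and below by positive constant multiples of γ_d^{1/τ}, uniformly in d. -/

import Mathlib

open Finset

lemma aux_add_rpow {a b p : ℝ} (ha : 0 ≤ a) (hb : 0 ≤ b) (hp : 1 ≤ p) :
    a ^ p + b ^ p ≤ (a + b) ^ p := by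
  have h := NNReal.add_rpow_le_rpow_add a.toNNReal b.toNNReal hp
  have := NNReal.coe_le_coe.2 h
  push_cast [NNReal.coe_rpow, Real.coe_toNNReal _ ha, Real.coe_toNNReal _ hb,
    Real.coe_toNNReal _ (add_nonneg ha hb)] at this
  simpa [← Real.toNNReal_add ha hb, Real.coe_toNNReal _ (add_nonneg ha hb)] using this

lemma aux_jensen {ι : Type*} (s : Finset ι) (f : ι → ℝ) (hf : ∀ i ∈ s, 0 ≤ f i)
    {r : ℝ} (hr : 1 ≤ r) : ∑ i ∈ s, f i ^ r ≤ (∑ i ∈ s, f i) ^ r := by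
  classical
  induction s using Finset.cons_induction with
  | empty => simp [Real.zero_rpow (by linarith : r ≠ 0)]
  | cons a s ha ih =>
    rw [Finset.sum_cons, Finset.sum_cons]
    have h1 : ∑ i ∈ s, f i ^ r ≤ (∑ i ∈ s, f i) ^ r :=
      ih fun i hi => hf i (Finset.mem_cons_of_mem hi)
    have h2 := aux_add_rpow (hf a (Finset.mem_cons_self a s))
      (Finset.sum_nonneg fun i hi => hf i (Finset.mem_cons_of_mem hi)) hr
    linarith

lemma aux_binom : ∀ (n : ℕ) (T g : ℝ), 0 ≤ T → 0 ≤ g →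
    T ^ (n + 1) + (n + 1) * g * T ^ n ≤ (T + g) ^ (n + 1) := by
  intro n
  induction n with
  | zero => intro T g hT hg; simp
  | succ n ih =>
    intro T g hT hg
    have h := ih T g hT hg
    have hTn : (0:ℝ) ≤ T ^ n := pow_nonneg hT n
    have hprod := mul_le_mul_of_nonneg_left h (by linarith : (0:ℝ) ≤ T + g)
    simp only [pow_succ] at *
    push_cast at h hprod ⊢
    nlinarith [mul_nonneg (mul_nonneg hg hg) hTn, mul_nonneg hg hTn, hT, hg]

lemma aux_esymm {ι : Type*} [DecidableEq ι] (g : ι → ℝ) (hg : ∀ i, 0 ≤ g i) (F : Finset ι) :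
    ∀ ℓ : ℕ, ∑ v ∈ F.powersetCard ℓ, ∏ j ∈ v, g j ≤ (∑ j ∈ F, g j) ^ ℓ / ℓ.factorial := by
  induction F using Finset.induction with
  | empty =>
    intro ℓ
    cases ℓ with
    | zero => simp
    | succ n =>
      have : Finset.powersetCard (n+1) (∅ : Finset ι) = ∅ := by
        rw [Finset.powersetCard_eq_empty]; simp
      rw [this]
      simp
  | insert a s ha ih =>
    intro ℓ
    cases ℓ with
    | zero => simp
    | succ n =>
      rw [Finset.powersetCard_succ_insert ha]
      have hdisj : Disjoint (powersetCard (n+1) s) ((powersetCard n s).image (insert a)) := by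
        rw [Finset.disjoint_left]
        intro v hv hv2
        simp only [Finset.mem_image] at hv2
        obtain ⟨t, ht, rfl⟩ := hv2
        exact ha ((Finset.mem_powersetCard.1 hv).1 (Finset.mem_insert_self a t))
      rw [Finset.sum_union hdisj]
      have hinj : ∀ x ∈ powersetCard n s, ∀ y ∈ powersetCard n s,
          insert a x = insert a y → x = y := by
        intro x hx y hy hxy
        have hax : a ∉ x := fun h => ha ((Finset.mem_powersetCard.1 hx).1 h)
        have hay : a ∉ y := fun h => ha ((Finset.mem_powersetCard.1 hy).1 h)
        have : (insert a x).erase a = (insert a y).erase a := by rw [hxy]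
        rwa [Finset.erase_insert hax, Finset.erase_insert hay] at this
      rw [Finset.sum_image hinj]
      have e : ∀ v ∈ powersetCard n s, ∏ j ∈ insert a v, g j = g a * ∏ j ∈ v, g j := by
        intro v hv
        have : a ∉ v := fun h => ha ((Finset.mem_powersetCard.1 hv).1 h)
        rw [Finset.prod_insert this]
      rw [Finset.sum_congr rfl e, ← Finset.mul_sum, Finset.sum_insert ha]
      set T := ∑ j ∈ s, g j with hT
      have hT0 : 0 ≤ T := Finset.sum_nonneg fun i _ => hg i
      have h1 := ih (n+1)
      have h2 := ih n
      have hb := aux_binom n T (g a) hT0 (hg a)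
      have hfacn : (0:ℝ) < n.factorial := by positivity
      have hfac : (0:ℝ) < (n+1).factorial := by positivity
      have hfe : ((n+1).factorial : ℝ) = (n+1) * n.factorial := by
        push_cast [Nat.factorial_succ]; ring
      have key : T ^ (n+1) / ((n+1).factorial : ℝ) + g a * (T ^ n / n.factorial)
          ≤ (g a + T) ^ (n + 1) / ((n+1).factorial : ℝ) := by
        have e2 : g a * (T ^ n / (n.factorial : ℝ))
            = ((n+1) * g a * T ^ n) / ((n+1).factorial : ℝ) := by
          rw [hfe]; field_simp
        rw [e2, ← add_div]
        have : (T + g a) ^ (n+1) = (g a + T) ^ (n+1) := by ring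
        rw [← this]
        gcongr
      have hstep := add_le_add h1 (mul_le_mul_of_nonneg_left h2 (hg a))
      linarith

open Finset Filter

lemma aux_poly (γ : ℕ → ℝ) (hγ0 : ∀ j, 0 ≤ γ j) (hγmono : Antitone γ) {s : ℝ} (hs : 0 < s)
    (h : Tendsto (fun j : ℕ => γ j * (j : ℝ) ^ s) atTop (nhds 0)) :
    ∃ C : ℝ, 0 < C ∧ ∀ j : ℕ, 1 ≤ j → γ j ≤ C * (j : ℝ) ^ (-s) := by
  have hev : ∀ᶠ j : ℕ in atTop, γ j * (j:ℝ) ^ s < 1 :=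
    h.eventually (eventually_lt_nhds (by norm_num : (0:ℝ) < 1))
  obtain ⟨N, hN⟩ := eventually_atTop.1 hev
  set M := max N 1 with hM
  refine ⟨max 1 (γ 1 * (M:ℝ) ^ s), lt_max_of_lt_left one_pos, ?_⟩
  intro j hj
  have hj0 : (0:ℝ) < (j:ℝ) := by exact_mod_cast hj
  have hjs : (0:ℝ) < (j:ℝ) ^ s := Real.rpow_pos_of_pos hj0 s
  have hneg : (j:ℝ) ^ (-s) = ((j:ℝ) ^ s)⁻¹ := Real.rpow_neg hj0.le s ▸ rfl
  have hnegpos : (0:ℝ) < (j:ℝ) ^ (-s) := Real.rpow_pos_of_pos hj0 _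
  by_cases hcase : M ≤ j
  · have h1 : γ j * (j:ℝ) ^ s < 1 := hN j (le_trans (le_max_left N 1) hcase)
    have h2 : γ j ≤ ((j:ℝ) ^ s)⁻¹ := by
      rw [← one_div, le_div_iff₀ hjs]; linarith
    calc γ j ≤ ((j:ℝ) ^ s)⁻¹ := h2
      _ = 1 * (j:ℝ) ^ (-s) := by rw [hneg]; ring
      _ ≤ max 1 (γ 1 * (M:ℝ) ^ s) * (j:ℝ) ^ (-s) :=
          mul_le_mul_of_nonneg_right (le_max_left _ _) hnegpos.le
  · push_neg at hcase
    have hjM : (j:ℝ) ≤ (M:ℝ) := by exact_mod_cast hcase.le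
    have h2 : (j:ℝ) ^ s ≤ (M:ℝ) ^ s := Real.rpow_le_rpow hj0.le hjM (le_of_lt hs)
    have h3 : γ j ≤ γ 1 := hγmono hj
    have h4 : (1:ℝ) ≤ (M:ℝ) ^ s * (j:ℝ) ^ (-s) := by
      rw [hneg, ← div_eq_mul_inv, le_div_iff₀ hjs]
      linarith
    calc γ j ≤ γ 1 := h3
      _ ≤ γ 1 * ((M:ℝ) ^ s * (j:ℝ) ^ (-s)) := le_mul_of_one_le_right (hγ0 1) h4
      _ = (γ 1 * (M:ℝ) ^ s) * (j:ℝ) ^ (-s) := by ring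
      _ ≤ max 1 (γ 1 * (M:ℝ) ^ s) * (j:ℝ) ^ (-s) :=
          mul_le_mul_of_nonneg_right (le_max_right _ _) hnegpos.le

lemma aux_series {α S : ℝ} (hα : α < 1) (hS : 0 < S) :
    ∃ B : ℝ, 1 ≤ B ∧ ∀ F : Finset ℕ,
      ∑ ℓ ∈ F, (((ℓ+1).factorial : ℝ)) ^ α / (ℓ.factorial : ℝ) * S ^ ℓ ≤ B := by
  set a : ℕ → ℝ := fun ℓ => (((ℓ+1).factorial : ℝ)) ^ α / (ℓ.factorial : ℝ) * S ^ ℓ with ha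
  have ha_pos : ∀ ℓ, 0 < a ℓ := by
    intro ℓ
    have h1 : (0:ℝ) < ((ℓ+1).factorial : ℝ) := by positivity
    have := Real.rpow_pos_of_pos h1 α
    positivity
  have hrec : ∀ ℓ : ℕ, a (ℓ+1) = a ℓ * (((ℓ:ℝ)+2) ^ α * S / ((ℓ:ℝ)+1)) := by
    intro ℓ
    have hf1 : (((ℓ+2).factorial : ℝ)) = ((ℓ:ℝ)+2) * ((ℓ+1).factorial : ℝ) := by
      rw [Nat.factorial_succ]; push_cast; ring
    have hf2 : (((ℓ+1).factorial : ℝ)) = ((ℓ:ℝ)+1) * (ℓ.factorial : ℝ) := by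
      rw [Nat.factorial_succ]; push_cast; ring
    have hr : (((ℓ+2).factorial : ℝ)) ^ α = ((ℓ:ℝ)+2) ^ α * ((ℓ+1).factorial : ℝ) ^ α := by
      rw [hf1, Real.mul_rpow (by positivity) (by positivity)]
    simp only [ha]
    have e1 : ℓ + 1 + 1 = ℓ + 2 := by ring
    rw [e1, hr, hf2, pow_succ]
    have hfa : (0:ℝ) < (ℓ.factorial : ℝ) := by positivity
    field_simp
  have htend : Tendsto (fun ℓ : ℕ => ((ℓ:ℝ)+2) ^ α * S / ((ℓ:ℝ)+1)) atTop (nhds 0) := by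
    have h1 : Tendsto (fun ℓ : ℕ => ((ℓ:ℝ)+2) ^ (α - 1)) atTop (nhds 0) := by
      have hb : Tendsto (fun ℓ : ℕ => (ℓ:ℝ)+2) atTop atTop :=
        tendsto_atTop_add_const_right _ 2 tendsto_natCast_atTop_atTop
      have := (tendsto_rpow_neg_atTop (by linarith : (0:ℝ) < 1 - α)).comp hb
      simpa [neg_sub, Function.comp_def] using this
    have h2 : Tendsto (fun ℓ : ℕ => 2 * S * ((ℓ:ℝ)+2) ^ (α - 1)) atTop (nhds 0) := by
      simpa using h1.const_mul (2 * S)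
    apply squeeze_zero (fun ℓ => ?_) (fun ℓ => ?_) h2
    · positivity
    · have hp2 : (0:ℝ) < (ℓ:ℝ) + 2 := by positivity
      have hp1 : (0:ℝ) < (ℓ:ℝ) + 1 := by positivity
      have e : ((ℓ:ℝ)+2) ^ (α - 1) = ((ℓ:ℝ)+2) ^ α / ((ℓ:ℝ)+2) := by
        rw [Real.rpow_sub hp2, Real.rpow_one]
      rw [e, ← mul_div_assoc, div_le_div_iff₀ hp1 hp2]
      have hxa : (0:ℝ) ≤ ((ℓ:ℝ)+2) ^ α := Real.rpow_nonneg hp2.le α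
      nlinarith [mul_nonneg hxa hS.le]
  have hsum : Summable a := by
    apply summable_of_ratio_norm_eventually_le (r := 1/2) (by norm_num)
    have hev := htend.eventually (eventually_le_nhds (by norm_num : (0:ℝ) < 1/2))
    filter_upwards [hev] with ℓ hℓ
    have hnn1 : ‖a (ℓ+1)‖ = a (ℓ+1) := Real.norm_of_nonneg (ha_pos _).le
    have hnn2 : ‖a ℓ‖ = a ℓ := Real.norm_of_nonneg (ha_pos _).le
    rw [hnn1, hnn2, hrec ℓ]
    calc a ℓ * (((ℓ:ℝ)+2) ^ α * S / ((ℓ:ℝ)+1)) ≤ a ℓ * (1/2) :=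
          mul_le_mul_of_nonneg_left hℓ (ha_pos ℓ).le
      _ = 1/2 * a ℓ := by ring
  refine ⟨max 1 (∑' ℓ, a ℓ), le_max_left _ _, fun F => ?_⟩
  calc ∑ ℓ ∈ F, a ℓ ≤ ∑' ℓ, a ℓ := Summable.sum_le_tsum F (fun i _ => (ha_pos i).le) hsum
    _ ≤ max 1 (∑' ℓ, a ℓ) := le_max_right _ _


/-- For POD weights `γ_u = Γ_{|u|} ∏_{j∈u} γ_j` with `decay_{γ,1} = p*` and
`Γ_k ≤ C_q (k!)^q` for some `q < p*`: for every `τ ∈ [1, p*)` and every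
constant `C̃_τ > 0`, the quantity `∑_{u : d ∈ u ⊆ [d]} γ_u^{1/τ} C̃_τ^{|u|}` is
bounded above and below by positive constant multiples of `γ_d^{1/τ}`,
uniformly in `d`. -/
theorem stmt_9 (γ : ℕ → ℝ) (Γ : ℕ → ℝ) (pstar q Cq : ℝ)
    (hγ0 : ∀ j, 0 ≤ γ j) (hγmono : Antitone γ)
    (hΓ0 : Γ 0 = 1) (hΓ1 : Γ 1 = 1) (hΓnn : ∀ k, 0 ≤ Γ k)
    (hdecay : IsLUB {p : ℝ |
        Filter.Tendsto (fun j : ℕ => γ j * (j : ℝ) ^ p) Filter.atTop (nhds 0)} pstar)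
    (hq : q < pstar) (hCq : 0 < Cq)
    (hΓ : ∀ k : ℕ, Γ k ≤ Cq * (k.factorial : ℝ) ^ q) :
    ∀ τ : ℝ, 1 ≤ τ → τ < pstar → ∀ Ct : ℝ, 0 < Ct →
      ∃ c₁ c₂ : ℝ, 0 < c₁ ∧ 0 < c₂ ∧ ∀ d : ℕ, 1 ≤ d →
        c₁ * γ d ^ (1 / τ) ≤
          (∑ u ∈ (Finset.Icc 1 d).powerset.filter (fun u => d ∈ u),
            (Γ u.card * ∏ j ∈ u, γ j) ^ (1 / τ) * Ct ^ u.card) ∧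
        (∑ u ∈ (Finset.Icc 1 d).powerset.filter (fun u => d ∈ u),
            (Γ u.card * ∏ j ∈ u, γ j) ^ (1 / τ) * Ct ^ u.card) ≤
          c₂ * γ d ^ (1 / τ) := by
  intro τ hτ1 hτp Ct hCt
  classical
  have hτ0 : (0:ℝ) < τ := lt_of_lt_of_le one_pos hτ1
  -- nonnegativity of each term
  have hA_nn : ∀ u : Finset ℕ, 0 ≤ Γ u.card * ∏ j ∈ u, γ j := fun u =>
    mul_nonneg (hΓnn _) (Finset.prod_nonneg fun j _ => hγ0 j)
  have hterm_nn : ∀ u : Finset ℕ,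
      0 ≤ (Γ u.card * ∏ j ∈ u, γ j) ^ (1/τ) * Ct ^ u.card := fun u =>
    mul_nonneg (Real.rpow_nonneg (hA_nn u) _) (pow_nonneg hCt.le _)
  -- choose p
  set p := (max τ q + pstar)/2 with hp
  have hmax : max τ q < pstar := max_lt hτp hq
  have hmaxp : max τ q < p := by rw [hp]; linarith
  have hppstar : p < pstar := by rw [hp]; linarith
  have hτlt : τ < p := lt_of_le_of_lt (le_max_left τ q) hmaxp
  have hqlt : q < p := lt_of_le_of_lt (le_max_right τ q) hmaxp
  have hp1 : 1 < p := lt_of_le_of_lt hτ1 hτlt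
  have hp0 : (0:ℝ) < p := lt_trans one_pos hp1
  -- obtain decay exponent s > p
  obtain ⟨s, hs_mem, hps⟩ : ∃ s ∈ {r : ℝ |
      Filter.Tendsto (fun j : ℕ => γ j * (j : ℝ) ^ r) Filter.atTop (nhds 0)}, p < s := by
    by_contra hcon
    push_neg at hcon
    exact absurd (hdecay.2 fun x hx => hcon x hx) (not_le.2 hppstar)
  have hs0 : (0:ℝ) < s := lt_trans hp0 hps
  obtain ⟨C, hC0, hCb⟩ := aux_poly γ hγ0 hγmono hs0 hs_mem
  set c := Ct ^ (τ/p) with hc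
  have hc0 : (0:ℝ) < c := Real.rpow_pos_of_pos hCt _
  set α := q/p with hα'
  have hα : α < 1 := (div_lt_one hp0).2 hqlt
  set g : ℕ → ℝ := fun j => C ^ (1/p) * c * (j:ℝ) ^ (-(s/p)) with hgdef
  have hg0 : ∀ j, 0 ≤ g j := fun j =>
    mul_nonneg (mul_nonneg (Real.rpow_nonneg hC0.le _) hc0.le)
      (Real.rpow_nonneg (Nat.cast_nonneg j) _)
  have hsp1 : 1 < s/p := (one_lt_div hp0).2 hps
  have hgsum : Summable g := by
    apply Summable.mul_left
    exact Real.summable_nat_rpow.2 (by linarith)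
  set S := ∑' j, g j with hS
  have hg1 : g 1 = C ^ (1/p) * c := by simp [hgdef]
  have hS0 : (0:ℝ) < S := by
    have h1 : g 1 ≤ S := Summable.le_tsum hgsum 1 fun j _ => hg0 j
    have : (0:ℝ) < g 1 := by rw [hg1]; positivity
    linarith
  have hSb : ∀ F : Finset ℕ, ∑ j ∈ F, g j ≤ S := fun F =>
    Summable.sum_le_tsum F (fun i _ => hg0 i) hgsum
  obtain ⟨B, hB1, hBb⟩ := aux_series hα hS0
  set K := c * Cq ^ (1/p) * B with hK
  have hK0 : (0:ℝ) < K := by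
    have hB0 : (0:ℝ) < B := lt_of_lt_of_le one_pos hB1
    have : (0:ℝ) < Cq ^ (1/p) := Real.rpow_pos_of_pos hCq _
    rw [hK]; positivity
  refine ⟨Ct, K ^ (p/τ), hCt, Real.rpow_pos_of_pos hK0 _, fun d hd => ?_⟩
  -- abbreviations
  set Fd := (Finset.Icc 1 d).powerset.filter (fun u => d ∈ u) with hFd
  constructor
  · -- lower bound
    have hmem : ({d} : Finset ℕ) ∈ Fd := by
      rw [hFd, Finset.mem_filter, Finset.mem_powerset]
      exact ⟨Finset.singleton_subset_iff.2 (Finset.mem_Icc.2 ⟨hd, le_refl d⟩),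
        Finset.mem_singleton_self d⟩
    have hval : (Γ ({d} : Finset ℕ).card * ∏ j ∈ ({d} : Finset ℕ), γ j) ^ (1/τ)
        * Ct ^ ({d} : Finset ℕ).card = γ d ^ (1/τ) * Ct := by
      simp [hΓ1]
    calc Ct * γ d ^ (1/τ) = (Γ ({d} : Finset ℕ).card * ∏ j ∈ ({d} : Finset ℕ), γ j) ^ (1/τ)
          * Ct ^ ({d} : Finset ℕ).card := by rw [hval]; ring
      _ ≤ ∑ u ∈ Fd, (Γ u.card * ∏ j ∈ u, γ j) ^ (1/τ) * Ct ^ u.card :=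
          Finset.single_le_sum (fun u _ => hterm_nn u) hmem
  · -- upper bound
    set X : Finset ℕ → ℝ := fun u => (Γ u.card * ∏ j ∈ u, γ j) * (Ct ^ τ) ^ u.card with hX
    have hCtτ : (0:ℝ) ≤ Ct ^ τ := Real.rpow_nonneg hCt.le τ
    have hXnn : ∀ u, 0 ≤ X u := fun u => mul_nonneg (hA_nn u) (pow_nonneg hCtτ _)
    have hCtm : ∀ m : ℕ, ((Ct ^ τ) ^ m : ℝ) ^ (1/τ) = Ct ^ m := by
      intro m
      rw [← Real.rpow_natCast (Ct ^ τ) m, ← Real.rpow_mul hCt.le, ← Real.rpow_mul hCt.le]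
      rw [show τ * (m:ℝ) * (1/τ) = (m:ℝ) by field_simp]
      exact Real.rpow_natCast Ct m
    have hcm : ∀ m : ℕ, ((Ct ^ τ) ^ m : ℝ) ^ (1/p) = c ^ m := by
      intro m
      rw [← Real.rpow_natCast (Ct ^ τ) m, ← Real.rpow_mul hCt.le, ← Real.rpow_mul hCt.le]
      rw [show τ * (m:ℝ) * (1/p) = (τ/p) * (m:ℝ) by ring, Real.rpow_mul hCt.le, hc]
      exact Real.rpow_natCast _ m
    have hterm_eq : ∀ u : Finset ℕ,
        (Γ u.card * ∏ j ∈ u, γ j) ^ (1/τ) * Ct ^ u.card = (X u) ^ (1/τ) := by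
      intro u
      rw [hX]
      rw [Real.mul_rpow (hA_nn u) (pow_nonneg hCtτ _), hCtm u.card]
    rw [Finset.sum_congr rfl fun u _ => hterm_eq u]
    -- Jensen
    set r := p/τ with hr
    have hr1 : 1 ≤ r := (one_le_div hτ0).2 hτlt.le
    have hsplit : ∀ u, (X u) ^ (1/τ) = ((X u) ^ (1/p)) ^ r := by
      intro u
      rw [← Real.rpow_mul (hXnn u), show (1/p) * r = 1/τ by rw [hr]; field_simp]
    rw [Finset.sum_congr rfl fun u _ => hsplit u]
    have hjen := aux_jensen Fd (fun u => (X u) ^ (1/p))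
      (fun u _ => Real.rpow_nonneg (hXnn u) _) hr1
    refine le_trans hjen ?_
    -- bound the inner sum
    have hdIco : d ∉ Finset.Ico 1 d := by simp
    have hbij : ∑ u ∈ Fd, (X u) ^ (1/p)
        = ∑ v ∈ (Finset.Ico 1 d).powerset, (X (insert d v)) ^ (1/p) := by
      refine Finset.sum_nbij' (fun u => u.erase d) (fun v => insert d v) ?_ ?_ ?_ ?_ ?_
      · intro u hu
        rw [hFd, Finset.mem_filter, Finset.mem_powerset] at hu
        rw [Finset.mem_powerset]
        intro x hx
        have hx1 := hu.1 (Finset.mem_of_mem_erase hx)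
        rw [Finset.mem_Icc] at hx1
        rw [Finset.mem_Ico]
        exact ⟨hx1.1, lt_of_le_of_ne hx1.2 (Finset.ne_of_mem_erase hx)⟩
      · intro v hv
        rw [Finset.mem_powerset] at hv
        rw [hFd, Finset.mem_filter, Finset.mem_powerset]
        refine ⟨?_, Finset.mem_insert_self d v⟩
        intro x hx
        rcases Finset.mem_insert.1 hx with h | h
        · subst h; exact Finset.mem_Icc.2 ⟨hd, le_refl _⟩
        · have := hv h; rw [Finset.mem_Ico] at this
          exact Finset.mem_Icc.2 ⟨this.1, this.2.le⟩
      · intro u hu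
        rw [hFd, Finset.mem_filter] at hu
        exact Finset.insert_erase hu.2
      · intro v hv
        rw [Finset.mem_powerset] at hv
        exact Finset.erase_insert fun h => hdIco (hv h)
      · intro u hu
        rw [hFd, Finset.mem_filter] at hu
        rw [Finset.insert_erase hu.2]
    rw [hbij]
    -- pointwise bound on the powerset sum
    have hpoint : ∀ v ∈ (Finset.Ico 1 d).powerset,
        (X (insert d v)) ^ (1/p)
          ≤ γ d ^ (1/p) * (c * Cq ^ (1/p)) *
            (((v.card + 1).factorial : ℝ) ^ α * ∏ j ∈ v, g j) := by
      intro v hv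
      rw [Finset.mem_powerset] at hv
      have hdv : d ∉ v := fun h => hdIco (hv h)
      set m := v.card with hm
      have e1 : (insert d v).card = m + 1 := Finset.card_insert_of_notMem hdv
      have e2 : ∏ j ∈ insert d v, γ j = γ d * ∏ j ∈ v, γ j := Finset.prod_insert hdv
      have hprodnn : (0:ℝ) ≤ ∏ j ∈ v, γ j := Finset.prod_nonneg fun j _ => hγ0 j
      have hXv : X (insert d v) ^ (1/p)
          = Γ (m+1) ^ (1/p) * (γ d ^ (1/p) * (∏ j ∈ v, γ j) ^ (1/p)) * c ^ (m+1) := by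
        simp only [hX]
        rw [e1, e2,
          Real.mul_rpow (mul_nonneg (hΓnn _) (mul_nonneg (hγ0 d) hprodnn))
            (pow_nonneg hCtτ _),
          hcm, Real.mul_rpow (hΓnn _) (mul_nonneg (hγ0 d) hprodnn),
          Real.mul_rpow (hγ0 d) hprodnn]
      have hb1 : Γ (m+1) ^ (1/p) ≤ Cq ^ (1/p) * ((m+1).factorial : ℝ) ^ α := by
        have h1 := Real.rpow_le_rpow (hΓnn (m+1)) (hΓ (m+1)) (by positivity : (0:ℝ) ≤ 1/p)
        rwa [Real.mul_rpow hCq.le (Real.rpow_nonneg (Nat.cast_nonneg _) q),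
          ← Real.rpow_mul (Nat.cast_nonneg _),
          show q * (1/p) = α by rw [hα']; ring] at h1
      have hb2 : (∏ j ∈ v, γ j) ^ (1/p) * c ^ m ≤ ∏ j ∈ v, g j := by
        rw [← (Real.finset_prod_rpow v γ (fun j _ => hγ0 j) (1/p)),
          hm, ← Finset.prod_const, ← Finset.prod_mul_distrib]
        apply Finset.prod_le_prod
        · intro j _
          exact mul_nonneg (Real.rpow_nonneg (hγ0 j) _) hc0.le
        · intro j hj
          have hj1 : 1 ≤ j := (Finset.mem_Ico.1 (hv hj)).1
          have hjc : (0:ℝ) ≤ (j:ℝ) := Nat.cast_nonneg j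
          have h2 : γ j ^ (1/p) ≤ (C * (j:ℝ) ^ (-s)) ^ (1/p) :=
            Real.rpow_le_rpow (hγ0 j) (hCb j hj1) (by positivity)
          have h3 : (C * (j:ℝ) ^ (-s)) ^ (1/p) = C ^ (1/p) * (j:ℝ) ^ (-(s/p)) := by
            rw [Real.mul_rpow hC0.le (Real.rpow_nonneg hjc _),
              ← Real.rpow_mul hjc, show -s * (1/p) = -(s/p) by ring]
          calc γ j ^ (1/p) * c ≤ (C * (j:ℝ) ^ (-s)) ^ (1/p) * c :=
                mul_le_mul_of_nonneg_right h2 hc0.le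
            _ = g j := by rw [h3, hgdef]; ring
      calc X (insert d v) ^ (1/p)
          = (Γ (m+1) ^ (1/p)) * ((∏ j ∈ v, γ j) ^ (1/p) * c ^ m) * (γ d ^ (1/p) * c) := by
            rw [hXv, pow_succ]; ring
        _ ≤ (Cq ^ (1/p) * ((m+1).factorial : ℝ) ^ α) * (∏ j ∈ v, g j) * (γ d ^ (1/p) * c) := by
            apply mul_le_mul_of_nonneg_right _
              (mul_nonneg (Real.rpow_nonneg (hγ0 d) _) hc0.le)
            exact mul_le_mul hb1 hb2
              (mul_nonneg (Real.rpow_nonneg hprodnn _) (pow_nonneg hc0.le m))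
              (mul_nonneg (Real.rpow_pos_of_pos hCq _).le
                (Real.rpow_nonneg (Nat.cast_nonneg _) α))
        _ = γ d ^ (1/p) * (c * Cq ^ (1/p)) * (((m+1).factorial : ℝ) ^ α * ∏ j ∈ v, g j) := by
            ring
    -- sum the bound
    have hBsum : ∑ v ∈ (Finset.Ico 1 d).powerset,
        (((v.card + 1).factorial : ℝ) ^ α * ∏ j ∈ v, g j) ≤ B := by
      rw [Finset.sum_powerset]
      have hstep : ∀ ℓ ∈ Finset.range ((Finset.Ico 1 d).card + 1),
          ∑ v ∈ Finset.powersetCard ℓ (Finset.Ico 1 d),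
            (((v.card + 1).factorial : ℝ) ^ α * ∏ j ∈ v, g j)
          ≤ ((ℓ+1).factorial : ℝ) ^ α / (ℓ.factorial : ℝ) * S ^ ℓ := by
        intro ℓ _
        have hcardeq : ∀ v ∈ Finset.powersetCard ℓ (Finset.Ico 1 d),
            ((v.card + 1).factorial : ℝ) ^ α * ∏ j ∈ v, g j
              = ((ℓ+1).factorial : ℝ) ^ α * ∏ j ∈ v, g j := by
          intro v hv
          rw [(Finset.mem_powersetCard.1 hv).2]
        rw [Finset.sum_congr rfl hcardeq, ← Finset.mul_sum]
        have h1 := aux_esymm g hg0 (Finset.Ico 1 d) ℓ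
        have hT0 : (0:ℝ) ≤ ∑ j ∈ Finset.Ico 1 d, g j :=
          Finset.sum_nonneg fun j _ => hg0 j
        have h2 : (∑ j ∈ Finset.Ico 1 d, g j) ^ ℓ ≤ S ^ ℓ :=
          pow_le_pow_left₀ hT0 (hSb _) ℓ
        have hfach : (0:ℝ) < (ℓ.factorial : ℝ) := by positivity
        have hfa : (0:ℝ) ≤ ((ℓ+1).factorial : ℝ) ^ α :=
          Real.rpow_nonneg (Nat.cast_nonneg _) α
        calc ((ℓ+1).factorial : ℝ) ^ α
              * ∑ v ∈ Finset.powersetCard ℓ (Finset.Ico 1 d), ∏ j ∈ v, g j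
            ≤ ((ℓ+1).factorial : ℝ) ^ α * ((∑ j ∈ Finset.Ico 1 d, g j) ^ ℓ / ℓ.factorial) :=
              mul_le_mul_of_nonneg_left h1 hfa
          _ ≤ ((ℓ+1).factorial : ℝ) ^ α * (S ^ ℓ / ℓ.factorial) := by
              apply mul_le_mul_of_nonneg_left _ hfa
              exact (div_le_div_iff_of_pos_right hfach).2 h2
          _ = ((ℓ+1).factorial : ℝ) ^ α / (ℓ.factorial : ℝ) * S ^ ℓ := by ring
      calc ∑ ℓ ∈ Finset.range ((Finset.Ico 1 d).card + 1),
            ∑ v ∈ Finset.powersetCard ℓ (Finset.Ico 1 d),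
              (((v.card + 1).factorial : ℝ) ^ α * ∏ j ∈ v, g j)
          ≤ ∑ ℓ ∈ Finset.range ((Finset.Ico 1 d).card + 1),
              ((ℓ+1).factorial : ℝ) ^ α / (ℓ.factorial : ℝ) * S ^ ℓ :=
            Finset.sum_le_sum hstep
        _ ≤ B := hBb _
    have hccq : (0:ℝ) ≤ γ d ^ (1/p) * (c * Cq ^ (1/p)) :=
      mul_nonneg (Real.rpow_nonneg (hγ0 d) _)
        (mul_nonneg hc0.le (Real.rpow_pos_of_pos hCq _).le)
    have hsum_le : ∑ v ∈ (Finset.Ico 1 d).powerset, (X (insert d v)) ^ (1/p)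
        ≤ γ d ^ (1/p) * K := by
      calc ∑ v ∈ (Finset.Ico 1 d).powerset, (X (insert d v)) ^ (1/p)
          ≤ ∑ v ∈ (Finset.Ico 1 d).powerset, γ d ^ (1/p) * (c * Cq ^ (1/p)) *
              (((v.card + 1).factorial : ℝ) ^ α * ∏ j ∈ v, g j) :=
            Finset.sum_le_sum hpoint
        _ = γ d ^ (1/p) * (c * Cq ^ (1/p)) *
              ∑ v ∈ (Finset.Ico 1 d).powerset,
                (((v.card + 1).factorial : ℝ) ^ α * ∏ j ∈ v, g j) := by
            rw [← Finset.mul_sum]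
        _ ≤ γ d ^ (1/p) * (c * Cq ^ (1/p)) * B := mul_le_mul_of_nonneg_left hBsum hccq
        _ = γ d ^ (1/p) * K := by rw [hK]; ring
    have hsnn : (0:ℝ) ≤ ∑ v ∈ (Finset.Ico 1 d).powerset, (X (insert d v)) ^ (1/p) :=
      Finset.sum_nonneg fun v _ => Real.rpow_nonneg (hXnn _) _
    calc (∑ v ∈ (Finset.Ico 1 d).powerset, (X (insert d v)) ^ (1/p)) ^ r
        ≤ (γ d ^ (1/p) * K) ^ r :=
          Real.rpow_le_rpow hsnn hsum_le (le_trans zero_le_one hr1)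
      _ = (γ d ^ (1/p)) ^ r * K ^ r :=
          Real.mul_rpow (Real.rpow_nonneg (hγ0 d) _) hK0.le
      _ = γ d ^ ((1/p) * r) * K ^ r := by rw [← Real.rpow_mul (hγ0 d)]
      _ = γ d ^ (1/τ) * K ^ (p/τ) := by
          rw [show (1/p) * r = 1/τ by rw [hr]; field_simp, hr]
      _ = K ^ (p/τ) * γ d ^ (1/τ) := mul_comm _ _
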